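/- Let p be a prime and G a finite group with a normal subgroup N. Let P be a p-subgroup of G and set P0 := P ∩ N. Assume there exists a subgroup U of N such that every element of U has order coprime to p, every element of U commutes with every element of P0, and every element of C_N(P0) can be written as z·u with z in the center Z(P0) of P0 and u ∈ U. Let g be an element of G normalizing P, of order coprime to p, such that x⁻¹·g⁻¹xg ∈ P0 for all x ∈ P, and suppose there exists n ∈ N of order coprime to p normalizing P0 with g⁻¹xg = n⁻¹xn for all x ∈ P0. Then g ∈ C_G(P)·P·N; that is, there exist c ∈ C_G(P), y ∈ P and m ∈ N with g = c·y·m. -/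

import Mathlib

open Subgroup Pointwise

/-- Product of a subgroup `A` with a subgroup `B` normalized by `A`. -/
private def mulSubgroup {G : Type*} [Group G] (A B : Subgroup G)
    (h : ∀ a ∈ A, ∀ b ∈ B, a * b * a⁻¹ ∈ B) : Subgroup G where
  carrier := (A : Set G) * (B : Set G)
  one_mem' := ⟨1, A.one_mem, 1, B.one_mem, one_mul 1⟩
  mul_mem' := by
    rintro x y ⟨a, ha, b, hb, rfl⟩ ⟨a', ha', b', hb', rfl⟩
    refine ⟨a * a', mul_mem ha ha', (a'⁻¹ * b * a') * b', mul_mem ?_ hb', by group⟩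
    simpa using h a'⁻¹ (inv_mem ha') b hb
  inv_mem' := by
    rintro x ⟨a, ha, b, hb, rfl⟩
    exact ⟨a⁻¹, inv_mem ha, a * b⁻¹ * a⁻¹, h a ha b⁻¹ (inv_mem hb), by group⟩

private lemma mem_mulSubgroup {G : Type*} [Group G] {A B : Subgroup G}
    {h : ∀ a ∈ A, ∀ b ∈ B, a * b * a⁻¹ ∈ B} {x : G} :
    x ∈ mulSubgroup A B h ↔ ∃ a ∈ A, ∃ b ∈ B, a * b = x :=
  Set.mem_mul

private lemma aux_mem_normalizer_fin {G : Type*} [Group G] [Finite G] {P : Subgroup G} {x : G}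
    (h : ∀ y ∈ P, x * y * x⁻¹ ∈ P) : x ∈ Subgroup.normalizer (P : Set G) := by
  have h2 := Subgroup.mem_normalizer_fintype (S := (P : Set G)) (x := x)
    (fun n hn => h n hn)
  exact fun n => h2 n

private lemma aux_sylow_conj {p : ℕ} [Fact p.Prime] {M : Type*} [Group M] [Finite M]
    (P' Q' : Subgroup M) (hP' : IsPGroup p P') (hQ' : IsPGroup p Q')
    (hind : ¬ p ∣ P'.index) : ∃ m : M, ∀ x ∈ Q', m * x * m⁻¹ ∈ P' := by
  obtain ⟨S, hPS⟩ := hP'.exists_le_sylow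
  have hSP : (S : Subgroup M) = P' := by
    have h1 : P'.relIndex S * (S : Subgroup M).index = P'.index :=
      Subgroup.relIndex_mul_index hPS
    have h2 : P'.relIndex S ∣ Nat.card (S : Subgroup M) := by
      have := Subgroup.index_mul_card (P'.subgroupOf (S : Subgroup M))
      exact ⟨_, this.symm⟩
    obtain ⟨e, he⟩ := (IsPGroup.iff_card.mp S.2 : ∃ n, Nat.card (S : Subgroup M) = p ^ n)
    rw [he] at h2
    obtain ⟨i, hi, hival⟩ := (Nat.dvd_prime_pow ‹Fact p.Prime›.out).mp h2
    have hrel1 : P'.relIndex S = 1 := by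
      rcases Nat.eq_zero_or_pos i with h0 | h0
      · simpa [h0] using hival
      · exfalso
        apply hind
        calc p ∣ p ^ i := dvd_pow_self p h0.ne'
        _ = P'.relIndex S := hival.symm
        _ ∣ P'.index := ⟨_, h1.symm⟩
    exact le_antisymm (Subgroup.relIndex_eq_one.mp hrel1) hPS
  obtain ⟨S₂, hQS₂⟩ := hQ'.exists_le_sylow
  obtain ⟨m, hm⟩ := MulAction.exists_smul_eq M S₂ S
  refine ⟨m, fun x hx => ?_⟩
  have hx2 : x ∈ (S₂ : Set M) := hQS₂ hx
  have hmem : MulAut.conj m • x ∈ MulAut.conj m • (S₂ : Set M) := Set.smul_mem_smul_set hx2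
  rw [← Sylow.coe_smul, hm] at hmem
  have hmem2 : MulAut.conj m • x ∈ (S : Subgroup M) := hmem
  rw [hSP] at hmem2
  simpa [MulAut.smul_def, MulAut.conj_apply, mul_assoc] using hmem2

theorem stmt1 (p : ℕ) (hp : p.Prime) {G : Type*} [Group G] [Finite G]
    (N : Subgroup G) [N.Normal] (P : Subgroup G) (hPp : IsPGroup p P)
    (U : Subgroup G) (hUN : U ≤ N)
    (hUp' : ∀ u ∈ U, Nat.Coprime (orderOf u) p)
    (hUcomm : ∀ u ∈ U, ∀ x ∈ P ⊓ N, Commute u x)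
    (hcent : ∀ c ∈ N ⊓ Subgroup.centralizer ↑(P ⊓ N),
      ∃ z ∈ (P ⊓ N) ⊓ Subgroup.centralizer ↑(P ⊓ N), ∃ u ∈ U, c = z * u)
    (g : G) (hgP : g ∈ Subgroup.normalizer (P : Set G)) (hg : Nat.Coprime (orderOf g) p)
    (hgcomm : ∀ x ∈ P, x⁻¹ * (g⁻¹ * x * g) ∈ P ⊓ N)
    (n : G) (hnN : n ∈ N) (hn : Nat.Coprime (orderOf n) p)
    (hnP0 : n ∈ Subgroup.normalizer ((P ⊓ N : Subgroup G) : Set G))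
    (hgn : ∀ x ∈ P ⊓ N, g⁻¹ * x * g = n⁻¹ * x * n) :
    ∃ c ∈ Subgroup.centralizer (P : Set G), ∃ y ∈ P, ∃ m ∈ N, g = c * y * m := by
  haveI : Fact p.Prime := ⟨hp⟩
  have hNnormal : N.Normal := ‹N.Normal›
  set P0 : Subgroup G := P ⊓ N with hP0def
  set Cst : Subgroup G := N ⊓ Subgroup.centralizer (P0 : Set G) with hCstdef
  have hP0P : P0 ≤ P := inf_le_left
  have hP0N : P0 ≤ N := inf_le_right
  have hCstN : Cst ≤ N := inf_le_left
  -- basic conjugation facts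
  have hgPmem : ∀ x ∈ P, g * x * g⁻¹ ∈ P := fun x hx =>
    (Subgroup.mem_normalizer_iff.mp hgP x).mp hx
  have hgP0 : ∀ z ∈ P0, g * z * g⁻¹ ∈ P0 := fun z hz =>
    ⟨hgPmem z (hP0P hz), hNnormal.conj_mem z (hP0N hz) g⟩
  have hxP0 : ∀ x ∈ P, ∀ z ∈ P0, x * z * x⁻¹ ∈ P0 := fun x hx z hz =>
    Subgroup.mem_inf.mpr
      ⟨mul_mem (mul_mem hx (hP0P hz)) (inv_mem hx), hNnormal.conj_mem z (hP0N hz) x⟩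
  -- f1 : h' = n⁻¹ * g centralizes P0
  have f1 : ∀ z ∈ P0, (n⁻¹ * g) * z * (n⁻¹ * g)⁻¹ = z := by
    intro z hz
    have hw : g * z * g⁻¹ ∈ P0 := hgP0 z hz
    have hgneq := hgn _ hw
    have hzeq : g⁻¹ * (g * z * g⁻¹) * g = z := by group
    rw [hzeq] at hgneq
    calc (n⁻¹ * g) * z * (n⁻¹ * g)⁻¹ = n⁻¹ * (g * z * g⁻¹) * n := by group
    _ = z := hgneq.symm
  have f1' : ∀ z ∈ P0, (n⁻¹ * g)⁻¹ * z * (n⁻¹ * g) = z := by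
    intro z hz
    have h := f1 z hz
    calc (n⁻¹ * g)⁻¹ * z * (n⁻¹ * g)
        = (n⁻¹ * g)⁻¹ * ((n⁻¹ * g) * z * (n⁻¹ * g)⁻¹) * (n⁻¹ * g) := by rw [h]
    _ = z := by group
  -- fPn0
  have fPn0 : ∀ x ∈ P, x⁻¹ * (g * x * g⁻¹) ∈ P0 := by
    intro x hx
    have h2 := hgcomm (g * x * g⁻¹) (hgPmem x hx)
    have he : (g * x * g⁻¹)⁻¹ * (g⁻¹ * (g * x * g⁻¹) * g) = (x⁻¹ * (g * x * g⁻¹))⁻¹ := by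
      group
    rw [he] at h2
    simpa using inv_mem h2
  -- fc : the deviation of h'-conjugation on P lies in Cst
  have fc : ∀ x ∈ P, x⁻¹ * ((n⁻¹ * g) * x * (n⁻¹ * g)⁻¹) ∈ Cst := by
    intro x hx
    refine ⟨?_, Subgroup.mem_centralizer_iff.mpr ?_⟩
    · -- in N
      have he : x⁻¹ * ((n⁻¹ * g) * x * (n⁻¹ * g)⁻¹)
          = (x⁻¹ * n⁻¹ * x) * (x⁻¹ * (g * x * g⁻¹)) * n := by group
      rw [he]
      refine mul_mem (mul_mem ?_ (hP0N (fPn0 x hx))) hnN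
      have := hNnormal.conj_mem n⁻¹ (inv_mem hnN) x⁻¹
      simpa using this
    · -- in centralizer of P0
      intro z hz
      have hz' : z ∈ P0 := hz
      have hz2 : x * z * x⁻¹ ∈ P0 := hxP0 x hx z hz'
      have e1 := f1 _ hz2
      have e0 := f1' z hz'
      have key : (x⁻¹ * ((n⁻¹ * g) * x * (n⁻¹ * g)⁻¹)) * z
          * (x⁻¹ * ((n⁻¹ * g) * x * (n⁻¹ * g)⁻¹))⁻¹ = z := by
        calc (x⁻¹ * ((n⁻¹ * g) * x * (n⁻¹ * g)⁻¹)) * z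
              * (x⁻¹ * ((n⁻¹ * g) * x * (n⁻¹ * g)⁻¹))⁻¹
            = x⁻¹ * (n⁻¹ * g) * x * ((n⁻¹ * g)⁻¹ * z * (n⁻¹ * g)) * x⁻¹ * (n⁻¹ * g)⁻¹ * x := by
              group
        _ = x⁻¹ * (n⁻¹ * g) * x * z * x⁻¹ * (n⁻¹ * g)⁻¹ * x := by rw [e0]
        _ = x⁻¹ * ((n⁻¹ * g) * (x * z * x⁻¹) * (n⁻¹ * g)⁻¹) * x := by group
        _ = x⁻¹ * (x * z * x⁻¹) * x := by rw [e1]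
        _ = z := by group
      calc z * (x⁻¹ * ((n⁻¹ * g) * x * (n⁻¹ * g)⁻¹))
          = ((x⁻¹ * ((n⁻¹ * g) * x * (n⁻¹ * g)⁻¹)) * z
              * (x⁻¹ * ((n⁻¹ * g) * x * (n⁻¹ * g)⁻¹))⁻¹)
            * (x⁻¹ * ((n⁻¹ * g) * x * (n⁻¹ * g)⁻¹)) := by rw [key]
      _ = (x⁻¹ * ((n⁻¹ * g) * x * (n⁻¹ * g)⁻¹)) * z := by group
  -- P normalizes Cst
  have fPnormCst : ∀ x ∈ P, ∀ c ∈ Cst, x * c * x⁻¹ ∈ Cst := by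
    intro x hx c hc
    refine ⟨hNnormal.conj_mem c (hCstN hc) x, Subgroup.mem_centralizer_iff.mpr ?_⟩
    · intro z hz
      have hz' : z ∈ P0 := hz
      have hz2 : x⁻¹ * z * x ∈ P0 := by
        simpa using hxP0 x⁻¹ (inv_mem hx) z hz'
      have hcz := Subgroup.mem_centralizer_iff.mp hc.2 _ (by exact hz2 : (x⁻¹ * z * x) ∈ P0)
      calc z * (x * c * x⁻¹) = x * ((x⁻¹ * z * x) * c) * x⁻¹ := by group
      _ = x * (c * (x⁻¹ * z * x)) * x⁻¹ := by rw [hcz]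
      _ = (x * c * x⁻¹) * z := by group
  set M : Subgroup G := mulSubgroup P Cst fPnormCst with hMdef
  have hPM : P ≤ M := fun x hx => mem_mulSubgroup.mpr ⟨x, hx, 1, Cst.one_mem, mul_one x⟩
  have hCstM : Cst ≤ M := fun c hc => mem_mulSubgroup.mpr ⟨1, P.one_mem, c, hc, one_mul c⟩
  have hUCst : U ≤ Cst := fun u hu =>
    ⟨hUN hu, Subgroup.mem_centralizer_iff.mpr fun z hz => ((hUcomm u hu z hz).symm).eq⟩
  have hUM : U ≤ M := fun u hu => hCstM (hUCst hu)
  -- the index of P in M is coprime to p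
  have hindex : ¬ p ∣ (P.subgroupOf M).index := by
    have hbij : Function.Bijective
        (fun u : ↥U => (QuotientGroup.mk (⟨u, hUM u.2⟩ : ↥M)
          : ↥M ⧸ P.subgroupOf M)) := by
      constructor
      · intro a b hab
        rw [QuotientGroup.eq] at hab
        have hPab : ((a : G))⁻¹ * (b : G) ∈ P := by
          have h10 := Subgroup.mem_subgroupOf.mp hab
          simpa using h10
        have hUab : ((a : G))⁻¹ * (b : G) ∈ U := mul_mem (inv_mem a.2) b.2
        obtain ⟨kk, hkk⟩ := hPp ⟨_, hPab⟩
        have hord : orderOf ((a : G)⁻¹ * (b : G)) ∣ p ^ kk := by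
          apply orderOf_dvd_of_pow_eq_one
          have h11 := congrArg (fun t : ↥P => (t : G)) hkk
          simpa using h11
        have hcop : (orderOf ((a : G)⁻¹ * (b : G))).Coprime p := hUp' _ hUab
        have h12 : orderOf ((a : G)⁻¹ * (b : G)) = 1 := by
          apply Nat.dvd_one.mp
          have h13 := Nat.dvd_gcd (dvd_refl (orderOf ((a : G)⁻¹ * (b : G)))) hord
          rwa [Nat.Coprime.gcd_eq_one (hcop.pow_right kk)] at h13
        have h14 : (a : G)⁻¹ * (b : G) = 1 := orderOf_eq_one_iff.mp h12
        exact Subtype.ext (inv_mul_eq_one.mp h14)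
      · intro q
        refine QuotientGroup.induction_on q ?_
        intro m
        obtain ⟨y, hy, c, hc, hyc⟩ := mem_mulSubgroup.mp (M.inv_mem m.2)
        obtain ⟨z, hz, u, hu, hcu⟩ := hcent c hc
        have hzP : z ∈ P := hP0P (Subgroup.mem_inf.mp hz).1
        refine ⟨⟨u⁻¹, inv_mem hu⟩, ?_⟩
        have hmval : (m : G) = u⁻¹ * (z⁻¹ * y⁻¹) := by
          have h15 : y * (z * u) = ((m : G))⁻¹ := by rw [← hcu]; exact hyc
          have h16 := congrArg (fun t : G => t⁻¹) h15
          simp only [inv_inv] at h16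
          rw [← h16]; group
        apply (QuotientGroup.eq (s := P.subgroupOf M)).mpr
        rw [Subgroup.mem_subgroupOf]
        have h18 : u * (m : G) ∈ P := by
          rw [hmval]
          have h19 : u * (u⁻¹ * (z⁻¹ * y⁻¹)) = z⁻¹ * y⁻¹ := by group
          rw [h19]
          exact mul_mem (inv_mem hzP) (inv_mem hy)
        simpa using h18
    have hcard : (P.subgroupOf M).index = Nat.card ↥U := by
      rw [Subgroup.index]
      exact (Nat.card_eq_of_bijective _ hbij).symm
    rw [hcard]
    intro hdvd
    obtain ⟨u, hu⟩ := exists_prime_orderOf_dvd_card' (G := ↥U) p hdvd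
    have h1 : orderOf (u : G) = p := by rw [Subgroup.orderOf_coe]; exact hu
    have hcop := hUp' u u.2
    rw [h1] at hcop
    exact hp.one_lt.ne' ((Nat.coprime_self p).mp hcop)
  -- Sylow conjugation inside M
  have hP' : IsPGroup p (P.subgroupOf M) :=
    hPp.of_equiv (Subgroup.subgroupOfEquivOfLe hPM).symm
  set J : Subgroup G := Subgroup.map (MulAut.conj (n⁻¹ * g)).toMonoidHom P with hJdef
  have hJM : J ≤ M := by
    rintro w ⟨x, hx, rfl⟩
    refine mem_mulSubgroup.mpr ⟨x, hx, x⁻¹ * ((n⁻¹ * g) * x * (n⁻¹ * g)⁻¹), fc x hx, ?_⟩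
    simp only [MulEquiv.coe_toMonoidHom, MulAut.conj_apply]
    group
  have hJp : IsPGroup p J := hPp.map _
  have hJ' : IsPGroup p (J.subgroupOf M) :=
    hJp.of_equiv (Subgroup.subgroupOfEquivOfLe hJM).symm
  obtain ⟨m₀, hm₀⟩ := aux_sylow_conj (P.subgroupOf M) (J.subgroupOf M) hP' hJ' hindex
  have hconj : ∀ x ∈ P, (↑m₀ : G) * ((n⁻¹ * g) * x * (n⁻¹ * g)⁻¹) * (↑m₀ : G)⁻¹ ∈ P := by
    intro x hx
    have hxJ : (n⁻¹ * g) * x * (n⁻¹ * g)⁻¹ ∈ J := by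
      refine ⟨x, hx, ?_⟩
      simp only [MulEquiv.coe_toMonoidHom, MulAut.conj_apply]
    have hxM : (n⁻¹ * g) * x * (n⁻¹ * g)⁻¹ ∈ M := hJM hxJ
    have h3 := hm₀ ⟨_, hxM⟩ (Subgroup.mem_subgroupOf.mpr (by simpa using hxJ))
    have h4 := Subgroup.mem_subgroupOf.mp h3
    simpa using h4
  -- decompose m₀
  obtain ⟨y1, hy1, c1, hc1, hyc1⟩ := mem_mulSubgroup.mp m₀.2
  obtain ⟨z1, hz1, u₀, hu₀, hcu1⟩ := hcent c1 hc1
  have hz1P : z1 ∈ P := hP0P (Subgroup.mem_inf.mp hz1).1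
  have hy₀ : y1 * z1 ∈ P := mul_mem hy1 hz1P
  have hm0eq : (↑m₀ : G) = (y1 * z1) * u₀ := by rw [← hyc1, hcu1]; group
  set w₁ : G := u₀ * (n⁻¹ * g) with hw₁def
  have hw₁P : ∀ x ∈ P, w₁ * x * w₁⁻¹ ∈ P := by
    intro x hx
    have h5 := hconj x hx
    have heq : w₁ * x * w₁⁻¹
        = (y1 * z1)⁻¹ * ((↑m₀ : G) * ((n⁻¹ * g) * x * (n⁻¹ * g)⁻¹) * (↑m₀ : G)⁻¹)
          * (y1 * z1) := by
      rw [hw₁def, hm0eq]; group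
    rw [heq]
    exact mul_mem (mul_mem (inv_mem hy₀) h5) hy₀
  have hw₁norm : w₁ ∈ Subgroup.normalizer (P : Set G) := aux_mem_normalizer_fin hw₁P
  have hw₁z : ∀ z ∈ P0, w₁ * z * w₁⁻¹ = z := by
    intro z hz
    have e := f1 z hz
    have hcommu : u₀ * z = z * u₀ := (hUcomm u₀ hu₀ z hz).eq
    calc w₁ * z * w₁⁻¹ = u₀ * ((n⁻¹ * g) * z * (n⁻¹ * g)⁻¹) * u₀⁻¹ := by
          rw [hw₁def]; group
    _ = u₀ * z * u₀⁻¹ := by rw [e]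
    _ = z := by rw [hcommu]; group
  have hw₁x : ∀ x ∈ P, x⁻¹ * (w₁ * x * w₁⁻¹) ∈ P0 := by
    intro x hx
    have h1 : x⁻¹ * u₀ * x ∈ Cst := by
      simpa using fPnormCst x⁻¹ (inv_mem hx) u₀ (hUCst hu₀)
    have hγC : x⁻¹ * (w₁ * x * w₁⁻¹) ∈ Cst := by
      have e : x⁻¹ * (w₁ * x * w₁⁻¹)
          = (x⁻¹ * u₀ * x) * (x⁻¹ * ((n⁻¹ * g) * x * (n⁻¹ * g)⁻¹)) * u₀⁻¹ := by
        rw [hw₁def]; group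
      rw [e]
      exact mul_mem (mul_mem h1 (fc x hx)) (inv_mem (hUCst hu₀))
    exact Subgroup.mem_inf.mpr ⟨mul_mem (inv_mem hx) (hw₁P x hx), hCstN hγC⟩
  -- iteration of w₁-conjugation
  have hfix : ∀ j : ℕ, ∀ b ∈ P0, w₁ ^ j * b * (w₁ ^ j)⁻¹ = b := by
    intro j
    induction j with
    | zero => intro b hb; simp
    | succ j ih =>
      intro b hb
      calc w₁ ^ (j + 1) * b * (w₁ ^ (j + 1))⁻¹
          = w₁ ^ j * (w₁ * b * w₁⁻¹) * (w₁ ^ j)⁻¹ := by rw [pow_succ]; group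
      _ = w₁ ^ j * b * (w₁ ^ j)⁻¹ := by rw [hw₁z b hb]
      _ = b := ih b hb
  have hiter : ∀ j : ℕ, ∀ x ∈ P, w₁ ^ j * x * (w₁ ^ j)⁻¹
      = x * (x⁻¹ * (w₁ * x * w₁⁻¹)) ^ j := by
    intro j
    induction j with
    | zero => intro x hx; simp
    | succ j ih =>
      intro x hx
      have ha : x⁻¹ * (w₁ * x * w₁⁻¹) ∈ P0 := hw₁x x hx
      calc w₁ ^ (j + 1) * x * (w₁ ^ (j + 1))⁻¹
          = w₁ ^ j * (w₁ * x * w₁⁻¹) * (w₁ ^ j)⁻¹ := by rw [pow_succ]; group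
      _ = (w₁ ^ j * x * (w₁ ^ j)⁻¹)
            * (w₁ ^ j * (x⁻¹ * (w₁ * x * w₁⁻¹)) * (w₁ ^ j)⁻¹) := by group
      _ = (x * (x⁻¹ * (w₁ * x * w₁⁻¹)) ^ j) * (x⁻¹ * (w₁ * x * w₁⁻¹)) := by
            rw [ih x hx, hfix j _ ha]
      _ = x * (x⁻¹ * (w₁ * x * w₁⁻¹)) ^ (j + 1) := by rw [pow_succ]; group
  have hP0p : IsPGroup p P0 := hPp.to_le hP0P
  obtain ⟨E, hE⟩ := IsPGroup.iff_card.mp hP0p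
  have hw₁pow : w₁ ^ (p ^ E) ∈ Subgroup.centralizer (P : Set G) := by
    rw [Subgroup.mem_centralizer_iff]
    intro x hx
    have ha : x⁻¹ * (w₁ * x * w₁⁻¹) ∈ P0 := hw₁x x hx
    have hord : (x⁻¹ * (w₁ * x * w₁⁻¹)) ^ (p ^ E) = 1 := by
      have h6 : (⟨_, ha⟩ : P0) ^ (p ^ E) = 1 := by rw [← hE]; exact pow_card_eq_one'
      have h7 := congrArg (fun t : P0 => (t : G)) h6
      simpa using h7
    have h8 := hiter (p ^ E) x hx
    rw [hord, mul_one] at h8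
    calc x * w₁ ^ (p ^ E) = (w₁ ^ (p ^ E) * x * (w₁ ^ (p ^ E))⁻¹) * w₁ ^ (p ^ E) := by
          rw [h8]
    _ = w₁ ^ (p ^ E) * x := by group
  -- the element k
  set k : G := n * u₀⁻¹ with hkdef
  have hgkw : g = k * w₁ := by rw [hkdef, hw₁def]; group
  have hk_norm : k ∈ Subgroup.normalizer (P : Set G) := by
    have h19 : k = g * w₁⁻¹ := by rw [hgkw]; group
    rw [h19]; exact mul_mem hgP (inv_mem hw₁norm)
  have hkN : k ∈ N := mul_mem hnN (inv_mem (hUN hu₀))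
  -- the subgroup V = T * C
  have hCnormalizer : ∀ t ∈ Subgroup.normalizer (P : Set G), ∀ c ∈ Subgroup.centralizer (P : Set G),
      t * c * t⁻¹ ∈ Subgroup.centralizer (P : Set G) := by
    intro t ht c hc
    rw [Subgroup.mem_centralizer_iff]
    intro x hx
    have ht' : t⁻¹ ∈ Subgroup.normalizer (P : Set G) := inv_mem ht
    have hx' : t⁻¹ * x * t ∈ P := by
      have h20 := (Subgroup.mem_normalizer_iff.mp ht' x).mp hx
      simpa using h20
    have hcx := Subgroup.mem_centralizer_iff.mp hc _ hx'
    calc x * (t * c * t⁻¹) = t * ((t⁻¹ * x * t) * c) * t⁻¹ := by group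
    _ = t * (c * (t⁻¹ * x * t)) * t⁻¹ := by rw [hcx]
    _ = (t * c * t⁻¹) * x := by group
  set T : Subgroup G := Subgroup.normalizer (P : Set G) ⊓ (P ⊔ N) with hTdef
  have hTnormC : ∀ t ∈ T, ∀ c ∈ Subgroup.centralizer (P : Set G),
      t * c * t⁻¹ ∈ Subgroup.centralizer (P : Set G) := fun t ht =>
    hCnormalizer t (Subgroup.mem_inf.mp ht).1
  set V : Subgroup G := mulSubgroup T (Subgroup.centralizer (P : Set G)) hTnormC with hVdef
  have hkT : k ∈ T := Subgroup.mem_inf.mpr ⟨hk_norm, Subgroup.mem_sup_right hkN⟩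
  have hkV : k ∈ V := mem_mulSubgroup.mpr ⟨k, hkT, 1, one_mem _, mul_one k⟩
  have hCV : Subgroup.centralizer (P : Set G) ≤ V := fun c hc =>
    mem_mulSubgroup.mpr ⟨1, one_mem _, c, hc, one_mul c⟩
  have hPsupN : ∀ t ∈ P ⊔ N, g * t * g⁻¹ ∈ P ⊔ N := by
    intro t ht
    have ht2 : t ∈ ((P : Set G) * (N : Set G)) := by
      have h21 : t ∈ (↑(P ⊔ N) : Set G) := ht
      rwa [Subgroup.mul_normal] at h21
    obtain ⟨y, hy, m, hm, rfl⟩ := ht2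
    have h22 : g * (y * m) * g⁻¹ = (g * y * g⁻¹) * (g * m * g⁻¹) := by group
    rw [h22]
    exact mul_mem (Subgroup.mem_sup_left (hgPmem y hy))
      (Subgroup.mem_sup_right (hNnormal.conj_mem m hm g))
  have hgV : ∀ v ∈ V, g * v * g⁻¹ ∈ V := by
    intro v hv
    obtain ⟨t, ht, c, hc, rfl⟩ := mem_mulSubgroup.mp hv
    have hgt : g * t * g⁻¹ ∈ T := Subgroup.mem_inf.mpr
      ⟨mul_mem (mul_mem hgP (Subgroup.mem_inf.mp ht).1) (inv_mem hgP),
        hPsupN t (Subgroup.mem_inf.mp ht).2⟩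
    have hgc := hCnormalizer g hgP c hc
    exact mem_mulSubgroup.mpr ⟨g * t * g⁻¹, hgt, g * c * g⁻¹, hgc, by group⟩
  -- the quotient argument
  set S : Subgroup G := V ⊔ Subgroup.zpowers g with hSdef
  have hgS : g ∈ S := Subgroup.mem_sup_right (Subgroup.mem_zpowers g)
  have hVS : V ≤ S := le_sup_left
  have hSnorm : S ≤ Subgroup.normalizer (V : Set G) := sup_le Subgroup.le_normalizer
    (Subgroup.zpowers_le.mpr (aux_mem_normalizer_fin hgV))
  haveI hVnormal : (V.subgroupOf S).Normal := by
    constructor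
    intro v hv s
    rw [Subgroup.mem_subgroupOf] at hv ⊢
    have h23 : ((s * v * s⁻¹ : ↥S) : G) = (s : G) * (v : G) * (s : G)⁻¹ := by
      simp
    rw [h23]
    exact (Subgroup.mem_normalizer_iff.mp (hSnorm s.2) (v : G)).mp hv
  have hw₁S : w₁ ∈ S := by
    have h24 : w₁ = k⁻¹ * g := by rw [hgkw]; group
    rw [h24]; exact mul_mem (inv_mem (hVS hkV)) hgS
  have hmkk : (QuotientGroup.mk (⟨k, hVS hkV⟩ : ↥S) : ↥S ⧸ V.subgroupOf S) = 1 :=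
    (QuotientGroup.eq_one_iff _).mpr (Subgroup.mem_subgroupOf.mpr hkV)
  have hgfact : (⟨g, hgS⟩ : ↥S) = (⟨k, hVS hkV⟩ : ↥S) * ⟨w₁, hw₁S⟩ := by
    apply Subtype.ext; simpa using hgkw
  have hord1 : (QuotientGroup.mk (⟨g, hgS⟩ : ↥S) : ↥S ⧸ V.subgroupOf S) ^ (p ^ E) = 1 := by
    rw [hgfact, QuotientGroup.mk_mul, hmkk, one_mul]
    have h25 : ((⟨w₁, hw₁S⟩ : ↥S) ^ (p ^ E)) ∈ V.subgroupOf S := by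
      rw [Subgroup.mem_subgroupOf]
      have h26 : (((⟨w₁, hw₁S⟩ : ↥S) ^ (p ^ E) : ↥S) : G) = w₁ ^ (p ^ E) := by
        simp
      rw [h26]
      exact hCV hw₁pow
    calc (QuotientGroup.mk (⟨w₁, hw₁S⟩ : ↥S) : ↥S ⧸ V.subgroupOf S) ^ (p ^ E)
        = QuotientGroup.mk ((⟨w₁, hw₁S⟩ : ↥S) ^ (p ^ E)) := by
          rw [QuotientGroup.mk_pow]
    _ = 1 := (QuotientGroup.eq_one_iff _).mpr h25
  have hord2 : (QuotientGroup.mk (⟨g, hgS⟩ : ↥S) : ↥S ⧸ V.subgroupOf S) ^ (orderOf g)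
      = 1 := by
    have hgpow : (⟨g, hgS⟩ : ↥S) ^ (orderOf g) = 1 := by
      apply Subtype.ext; simpa using pow_orderOf_eq_one g
    calc (QuotientGroup.mk (⟨g, hgS⟩ : ↥S) : ↥S ⧸ V.subgroupOf S) ^ (orderOf g)
        = QuotientGroup.mk ((⟨g, hgS⟩ : ↥S) ^ (orderOf g)) := by rw [QuotientGroup.mk_pow]
    _ = 1 := by rw [hgpow]; rfl
  have hdvd1 : orderOf (QuotientGroup.mk (⟨g, hgS⟩ : ↥S) : ↥S ⧸ V.subgroupOf S) ∣ p ^ E :=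
    orderOf_dvd_of_pow_eq_one hord1
  have hdvd2 : orderOf (QuotientGroup.mk (⟨g, hgS⟩ : ↥S) : ↥S ⧸ V.subgroupOf S)
      ∣ orderOf g := orderOf_dvd_of_pow_eq_one hord2
  have hordone : orderOf (QuotientGroup.mk (⟨g, hgS⟩ : ↥S) : ↥S ⧸ V.subgroupOf S) = 1 := by
    apply Nat.dvd_one.mp
    have h27 := Nat.dvd_gcd hdvd2 hdvd1
    rwa [Nat.Coprime.gcd_eq_one (hg.pow_right E)] at h27
  have htriv : (QuotientGroup.mk (⟨g, hgS⟩ : ↥S) : ↥S ⧸ V.subgroupOf S) = 1 :=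
    orderOf_eq_one_iff.mp hordone
  have hgVmem : g ∈ V :=
    Subgroup.mem_subgroupOf.mp ((QuotientGroup.eq_one_iff _).mp htriv)
  -- final decomposition
  obtain ⟨t, ht, c, hc, htc⟩ := mem_mulSubgroup.mp hgVmem
  have ht2 : t ∈ ((P : Set G) * (N : Set G)) := by
    have h28 : t ∈ (↑(P ⊔ N) : Set G) := (Subgroup.mem_inf.mp ht).2
    rwa [Subgroup.mul_normal] at h28
  obtain ⟨y, hy, m, hm, rfl⟩ := ht2
  refine ⟨(y * m) * c * (y * m)⁻¹,
    hCnormalizer (y * m) (Subgroup.mem_inf.mp ht).1 c hc, y, hy, m, hm, ?_⟩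
  rw [← htc]; group
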